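/- For any state c of a CRN and any species S, if the concentration of S is bounded above over all states reachable from c, then there exists a state d reachable from c such that for every state a reachable from d, a(S) \leq d(S). -/

import Mathlib

open Finset


/-- A flux vector `u` is applicable at state `c` if every reaction with positive
flux has all of its reactants present (positive concentration) in `c`. -/
def Applicable {σ ρ : Type} (react : ρ → σ → ℕ) (u : ρ → ℝ) (c : σ → ℝ) : Prop :=
  ∀ r, 0 < u r → ∀ s, 0 < react r s → 0 < c s

/-- Net change of species `s` caused by applying flux vector `u`
(the stoichiometry matrix applied to `u`). -/
noncomputable def StoichAct {σ ρ : Type} [Fintype ρ] (react prod : ρ → σ → ℕ)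
    (u : ρ → ℝ) (s : σ) : ℝ :=
  ∑ r, u r * ((prod r s : ℝ) - (react r s : ℝ))

/-- State `d` is straight-line reachable from `c` via flux vector `u`. -/
def SLReach {σ ρ : Type} [Fintype ρ] (react prod : ρ → σ → ℕ)
    (u : ρ → ℝ) (c d : σ → ℝ) : Prop :=
  (∀ r, 0 ≤ u r) ∧ Applicable react u c ∧ (∀ s, 0 ≤ d s) ∧
    ∀ s, d s = c s + StoichAct react prod u s

/-- Flux vector `u` consumes species `s`. -/
def Consumes {σ ρ : Type} (react : ρ → σ → ℕ) (u : ρ → ℝ) (s : σ) : Prop :=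
  ∃ r, 0 < u r ∧ 0 < react r s

/-- Flux vector `u` produces species `s`. -/
def Produces {σ ρ : Type} (prod : ρ → σ → ℕ) (u : ρ → ℝ) (s : σ) : Prop :=
  ∃ r, 0 < u r ∧ 0 < prod r s

/-- `u1` is independent of `u2`: `u1` consumes no species produced or consumed by `u2`. -/
def Independent {σ ρ : Type} (react prod : ρ → σ → ℕ) (u1 u2 : ρ → ℝ) : Prop :=
  ∀ s, Consumes react u1 s → ¬ Consumes react u2 s ∧ ¬ Produces prod u2 s

/-- Reachability: a finite sequence of straight-line segments. -/
def Reach {σ ρ : Type} [Fintype ρ] (react prod : ρ → σ → ℕ) (c d : σ → ℝ) : Prop :=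
  Relation.ReflTransGen (fun x y => ∃ u, SLReach react prod u x y) c d

set_option linter.unusedSectionVars false


def PolyOn {ι : Type} [Fintype ι] (s : Finset ι) (T : Set (ι → ℝ)) : Prop :=
  ∃ (κ : Type) (_ : Fintype κ) (a : κ → ι → ℝ) (b : κ → ℝ),
    (∀ i j, j ∉ s → a i j = 0) ∧ T = {x | ∀ i, ∑ j, a i j * x j ≤ b i}

lemma sum_update_mul {ι : Type} [Fintype ι] [DecidableEq ι] (a x : ι → ℝ) (j : ι) (t : ℝ) :
    ∑ k, a k * Function.update x j t k = a j * t + ∑ k ∈ univ.erase j, a k * x k := by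
  rw [← Finset.add_sum_erase _ (fun k => a k * Function.update x j t k) (mem_univ j)]
  simp only [Function.update_self]
  congr 1
  apply Finset.sum_congr rfl
  intro k hk
  rw [Function.update_of_ne (Finset.ne_of_mem_erase hk)]

lemma sum_split_mul {ι : Type} [Fintype ι] [DecidableEq ι] (a x : ι → ℝ) (j : ι) :
    ∑ k, a k * x k = a j * x j + ∑ k ∈ univ.erase j, a k * x k := by
  have := sum_update_mul a x j (x j)
  rwa [Function.update_eq_self] at this

lemma sum_combo_mul {ι : Type} [Fintype ι] (ap aq x : ι → ℝ) (α β : ℝ) :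
    ∑ k, (α * ap k + β * aq k) * x k
      = α * (∑ k, ap k * x k) + β * (∑ k, aq k * x k) := by
  rw [Finset.mul_sum, Finset.mul_sum, ← Finset.sum_add_distrib]
  exact Finset.sum_congr rfl (fun k _ => by ring)

lemma polyOn_elim {ι : Type} [Fintype ι] [DecidableEq ι] {s : Finset ι} {T : Set (ι → ℝ)}
    (hT : PolyOn s T) (j : ι) :
    PolyOn (s.erase j) {x | ∃ t : ℝ, Function.update x j t ∈ T} := by
  classical
  obtain ⟨κ, _, a, b, hsupp, rfl⟩ := hT
  set S : κ → (ι → ℝ) → ℝ := fun i x => ∑ k ∈ univ.erase j, a i k * x k with hS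
  set c : κ → ℝ := fun i => a i j with hc
  refine ⟨{i : κ // c i = 0} ⊕ ({p : κ // 0 < c p} × {q : κ // c q < 0}), inferInstance,
    (fun i' => Sum.elim (fun i => a i.1)
      (fun pq => fun k => (-(c pq.2.1)) * a pq.1.1 k + c pq.1.1 * a pq.2.1 k) i'),
    (Sum.elim (fun i => b i.1)
      (fun pq => (-(c pq.2.1)) * b pq.1.1 + c pq.1.1 * b pq.2.1)),
    ?_, ?_⟩
  · rintro (⟨i, hi⟩ | ⟨⟨p, hp⟩, ⟨q, hq⟩⟩) k hk
    · simp only [Sum.elim_inl]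
      by_cases hkj : k = j
      · subst hkj; exact hi
      · exact hsupp i k (fun hks => (Finset.mem_erase.not.mp hk) ⟨hkj, hks⟩)
    · simp only [Sum.elim_inr]
      by_cases hkj : k = j
      · subst hkj
        show -(a q k) * a p k + a p k * a q k = 0
        ring
      · have h : k ∉ s := fun hks => (Finset.mem_erase.not.mp hk) ⟨hkj, hks⟩
        rw [hsupp p k h, hsupp q k h]; ring
  · ext x
    simp only [Set.mem_setOf_eq]
    constructor
    · rintro ⟨t, ht⟩
      have ht' : ∀ i, c i * t + S i x ≤ b i := by
        intro i
        have h2 := ht i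
        rw [sum_update_mul] at h2
        exact h2
      rintro (⟨i, hi⟩ | ⟨⟨p, hp⟩, ⟨q, hq⟩⟩)
      · simp only [Sum.elim_inl]
        rw [sum_split_mul _ _ j]
        show c i * x j + S i x ≤ b i
        have h2 := ht' i
        rw [hi] at h2 ⊢
        linarith
      · simp only [Sum.elim_inr]
        rw [sum_combo_mul]
        have e1 : (∑ k, a p k * x k) = c p * x j + S p x := sum_split_mul (a p) x j
        have e2 : (∑ k, a q k * x k) = c q * x j + S q x := sum_split_mul (a q) x j
        rw [e1, e2]
        nlinarith [mul_le_mul_of_nonneg_left (ht' p) (by linarith : (0:ℝ) ≤ -(c q)),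
          mul_le_mul_of_nonneg_left (ht' q) (le_of_lt hp)]
    · intro hx
      set Lq := univ.filter (fun q : κ => c q < 0) with hLq
      set Lp := univ.filter (fun p : κ => 0 < c p) with hLp
      have key : ∀ (p q : κ), 0 < c p → c q < 0 →
          (-(c q)) * (S p x) + c p * (S q x) ≤ (-(c q)) * b p + c p * b q := by
        intro p q hp hq
        have h2 := hx (Sum.inr (⟨p, hp⟩, ⟨q, hq⟩))
        simp only [Sum.elim_inr] at h2
        rw [sum_combo_mul] at h2
        have e1 : (∑ k, a p k * x k) = c p * x j + S p x := sum_split_mul (a p) x j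
        have e2 : (∑ k, a q k * x k) = c q * x j + S q x := sum_split_mul (a q) x j
        rw [e1, e2] at h2
        nlinarith [h2]
      have inlcase : ∀ (i : κ), c i = 0 → S i x ≤ b i := by
        intro i hci
        have h2 := hx (Sum.inl ⟨i, hci⟩)
        simp only [Sum.elim_inl] at h2
        rw [sum_split_mul _ _ j] at h2
        have h3 : c i * x j + S i x ≤ b i := h2
        rw [hci] at h3
        linarith
      by_cases hq : Lq.Nonempty
      · refine ⟨Lq.sup' hq (fun q => (b q - S q x) / c q), ?_⟩
        intro i
        rw [sum_update_mul]
        show c i * (Lq.sup' hq fun q => (b q - S q x) / c q) + S i x ≤ b i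
        set t := Lq.sup' hq (fun q => (b q - S q x) / c q) with hT2
        rcases lt_trichotomy (c i) 0 with hci | hci | hci
        · have hmem : i ∈ Lq := by simp [hLq, hci]
          have h4 : (b i - S i x) / c i ≤ t := Finset.le_sup' (fun q => (b q - S q x) / c q) hmem
          have := (div_le_iff_of_neg hci).mp h4
          linarith
        · have := inlcase i hci
          rw [hci]
          linarith
        · obtain ⟨q0, hq0mem, hq0⟩ := Finset.exists_mem_eq_sup' hq (fun q => (b q - S q x) / c q)
          have hq0n : c q0 < 0 := by
            have := hq0mem
            rw [hLq, Finset.mem_filter] at this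
            exact this.2
          have hct : c q0 * t = b q0 - S q0 x := by
            have hne : c q0 ≠ 0 := ne_of_lt hq0n
            rw [hT2, hq0]
            field_simp
          have := key i q0 hci hq0n
          nlinarith
      · by_cases hp : Lp.Nonempty
        · refine ⟨Lp.inf' hp (fun p => (b p - S p x) / c p), ?_⟩
          intro i
          rw [sum_update_mul]
          show c i * (Lp.inf' hp fun p => (b p - S p x) / c p) + S i x ≤ b i
          set t := Lp.inf' hp (fun p => (b p - S p x) / c p) with hT2
          rcases lt_trichotomy (c i) 0 with hci | hci | hci
          · exact absurd ⟨i, by simp [hLq, hci]⟩ hq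
          · have := inlcase i hci
            rw [hci]
            linarith
          · have hmem : i ∈ Lp := by simp [hLp, hci]
            have h4 : t ≤ (b i - S i x) / c i := Finset.inf'_le _ hmem
            have := (le_div_iff₀ hci).mp h4
            linarith
        · refine ⟨0, ?_⟩
          intro i
          rw [sum_update_mul]
          show c i * 0 + S i x ≤ b i
          have hci : c i = 0 := by
            rcases lt_trichotomy (c i) 0 with h | h | h
            · exact absurd ⟨i, by simp [hLq, h]⟩ hq
            · exact h
            · exact absurd ⟨i, by simp [hLp, h]⟩ hp
          have := inlcase i hci
          linarith

section
variable {ι : Type} [Fintype ι]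

def Elim (s' : Finset ι) (T : Set (ι → ℝ)) : Set (ι → ℝ) :=
  {x | ∃ y ∈ T, ∀ k, k ∉ s' → y k = x k}


lemma elim_empty (T : Set (ι → ℝ)) : Elim (∅ : Finset ι) T = T := by
  ext x
  constructor
  · rintro ⟨y, hy, h⟩
    have : y = x := funext (fun k => h k (Finset.notMem_empty k))
    rwa [← this]
  · intro hx
    exact ⟨x, hx, fun k _ => rfl⟩

lemma elim_insert [DecidableEq ι] (j : ι) (s' : Finset ι) (T : Set (ι → ℝ)) :
    Elim (insert j s') T = {x | ∃ t : ℝ, Function.update x j t ∈ Elim s' T} := by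
  ext x
  constructor
  · rintro ⟨y, hy, h⟩
    refine ⟨y j, y, hy, fun k hk => ?_⟩
    by_cases hkj : k = j
    · subst hkj; simp
    · rw [Function.update_of_ne hkj]
      exact h k (fun hmem => hk (((Finset.mem_insert.mp hmem).resolve_left hkj))) 
  · rintro ⟨t, y, hy, h⟩
    refine ⟨y, hy, fun k hk => ?_⟩
    have hkj : k ≠ j := fun e => hk (e ▸ Finset.mem_insert_self j s')
    have hks : k ∉ s' := fun e => hk (Finset.mem_insert_of_mem e)
    rw [h k hks, Function.update_of_ne hkj]

lemma polyOn_elimSet [DecidableEq ι] {s : Finset ι} {T : Set (ι → ℝ)}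
    (hT : PolyOn s T) (s' : Finset ι) : PolyOn (s \ s') (Elim s' T) := by
  classical
  induction s' using Finset.induction_on with
  | empty => rw [elim_empty, Finset.sdiff_empty]; exact hT
  | @insert j s' hj ih =>
    rw [elim_insert]
    have h2 := polyOn_elim ih j
    have : (s \ s').erase j = s \ insert j s' := by
      ext k
      simp only [Finset.mem_erase, Finset.mem_sdiff, Finset.mem_insert]
      tauto
    rwa [this] at h2

theorem lp_attain {K : Set (ι → ℝ)} (hK : PolyOn Finset.univ K)
    (hne : K.Nonempty) (w : ι → ℝ) (B : ℝ) (hb : ∀ x ∈ K, ∑ j, w j * x j ≤ B) :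
    ∃ x ∈ K, ∀ y ∈ K, ∑ j, w j * y j ≤ ∑ j, w j * x j := by
  classical
  obtain ⟨κ, _, a, b, _, hKeq⟩ := hK
  -- the lifted set in `Option ι`
  set K' : Set (Option ι → ℝ) :=
    {y | (fun j => y (some j)) ∈ K ∧ y (none : Option ι) = ∑ j, w j * y (some j)} with hK'
  have hK'poly : PolyOn (Finset.univ : Finset (Option ι)) K' := by
    refine ⟨κ ⊕ Bool, inferInstance,
      (fun i' => Sum.elim (fun i => fun o => Option.elim o 0 (a i))
        (fun v => fun o => Option.elim o (if v then 1 else -1)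
          (fun j => if v then -(w j) else w j)) i'),
      Sum.elim b (fun _ => 0), fun i j hj => absurd (Finset.mem_univ j) hj, ?_⟩
    ext y
    simp only [hK', Set.mem_setOf_eq, hKeq]
    constructor
    · rintro ⟨hyK, hyeq⟩
      rintro (i | v)
      · simp only [Sum.elim_inl]
        rw [Fintype.sum_option]
        simpa using hyK i
      · simp only [Sum.elim_inr]
        rw [Fintype.sum_option]
        cases v <;> simp <;> nlinarith [hyeq]
    · intro h
      have h1 := h (Sum.inr true)
      have h2 := h (Sum.inr false)
      simp only [Sum.elim_inr] at h1 h2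
      rw [Fintype.sum_option] at h1 h2
      simp at h1 h2
      constructor
      · intro i
        have h3 := h (Sum.inl i)
        simp only [Sum.elim_inl] at h3
        rw [Fintype.sum_option] at h3
        simpa using h3
      · nlinarith [h1, h2]
  -- eliminate all `some` coordinates
  set s' : Finset (Option ι) := Finset.univ.erase none with hs'
  have hpoly2 := polyOn_elimSet hK'poly s'
  obtain ⟨κ₂, _, a₂, b₂, hsupp₂, hEq₂⟩ := hpoly2
  have hzero : ∀ i (j : ι), a₂ i (some j) = 0 := by
    intro i j
    apply hsupp₂
    simp [hs']
  -- the value set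
  set I : Set ℝ := {r | ∃ x ∈ K, ∑ j, w j * x j = r} with hI
  have hchar : ∀ r : ℝ, r ∈ I ↔ ∀ i, a₂ i none * r ≤ b₂ i := by
    intro r
    constructor
    · rintro ⟨x, hx, hxr⟩
      have hy : (fun o => Option.elim o r x) ∈ K' := by
        constructor
        · simpa using hx
        · simpa using hxr.symm
      have hz : (fun _ : Option ι => r) ∈ Elim s' K' := by
        refine ⟨(fun o => Option.elim o r x), hy, fun k hk => ?_⟩
        have : k = none := by
          by_contra hkn
          exact hk (by simp [hs', hkn])
        subst this
        rfl
      rw [hEq₂] at hz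
      intro i
      have := hz i
      rw [Fintype.sum_option] at this
      simpa [hzero] using this
    · intro h
      have hz : (fun _ : Option ι => r) ∈ Elim s' K' := by
        rw [hEq₂]
        intro i
        rw [Fintype.sum_option]
        simpa [hzero] using h i
      obtain ⟨y, hyK', hyk⟩ := hz
      have hynone : y none = r := hyk none (by simp [hs'])
      exact ⟨fun j => y (some j), hyK'.1, by rw [← hyK'.2, hynone]⟩
  -- conclude via sSup
  obtain ⟨x₀, hx₀⟩ := hne
  have hIne : (∑ j, w j * x₀ j) ∈ I := ⟨x₀, hx₀, rfl⟩
  have hIbdd : BddAbove I := ⟨B, by rintro r ⟨x, hx, rfl⟩; exact hb x hx⟩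
  set M := sSup I with hM
  have hMI : M ∈ I := by
    rw [hchar]
    intro i
    rcases lt_trichotomy (a₂ i none) 0 with hα | hα | hα
    · have h1 : (∑ j, w j * x₀ j) ≤ M := le_csSup hIbdd hIne
      have h2 := (hchar _).mp hIne i
      nlinarith
    · rw [hα]
      have h2 := (hchar _).mp hIne i
      rw [hα] at h2
      linarith
    · have h1 : M ≤ b₂ i / a₂ i none := by
        apply csSup_le ⟨_, hIne⟩
        intro r hr
        have := (hchar r).mp hr i
        rw [le_div_iff₀ hα]
        linarith
      rw [le_div_iff₀ hα] at h1
      linarith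
  obtain ⟨x, hx, hxM⟩ := hMI
  refine ⟨x, hx, fun y hy => ?_⟩
  rw [hxM]
  exact le_csSup hIbdd ⟨y, hy, rfl⟩

end

section
variable {σ ρ : Type} [Fintype σ] [Fintype ρ] (react prod : ρ → σ → ℕ)

lemma stoich_add (u v : ρ → ℝ) (s : σ) :
    StoichAct react prod (fun r => u r + v r) s
      = StoichAct react prod u s + StoichAct react prod v s := by
  unfold StoichAct
  rw [← Finset.sum_add_distrib]
  exact Finset.sum_congr rfl (fun r _ => by ring)

lemma stoich_smul (t : ℝ) (u : ρ → ℝ) (s : σ) :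
    StoichAct react prod (fun r => t * u r) s = t * StoichAct react prod u s := by
  unfold StoichAct
  rw [Finset.mul_sum]
  exact Finset.sum_congr rfl (fun r _ => by ring)

lemma stoich_zero (s : σ) : StoichAct react prod (fun _ => (0:ℝ)) s = 0 := by
  unfold StoichAct
  simp

lemma reach_nonneg {c d : σ → ℝ} (hc : ∀ s, 0 ≤ c s)
    (h : Reach react prod c d) : ∀ s, 0 ≤ d s := by
  induction h with
  | refl => exact hc
  | tail _ h2 _ => obtain ⟨u, _, _, h3, _⟩ := h2; exact h3

lemma reach_shift {c d : σ → ℝ} (h : Reach react prod c d) (t : ℝ) (ht : 0 < t)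
    (z : σ → ℝ) (hz : ∀ s, 0 ≤ z s) :
    Reach react prod (fun s => t * c s + z s) (fun s => t * d s + z s) := by
  induction h with
  | refl => exact Relation.ReflTransGen.refl
  | @tail y d' _ h2 ih =>
    obtain ⟨u, hu0, huapp, hd0, heq⟩ := h2
    refine ih.tail ⟨fun r => t * u r, fun r => mul_nonneg (le_of_lt ht) (hu0 r), ?_, ?_, ?_⟩
    · intro r hr s hs
      have hr' : 0 < t * u r := hr
      have hur : 0 < u r := by
        by_contra hle
        push_neg at hle
        nlinarith
      have h1 := huapp r hur s hs
      have h2 := hz s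
      show 0 < t * y s + z s
      nlinarith
    · intro s
      have h1 := hd0 s
      have h2 := hz s
      show 0 ≤ t * d' s + z s
      nlinarith
    · intro s
      show t * d' s + z s = (t * y s + z s) + StoichAct react prod (fun r => t * u r) s
      rw [stoich_smul, heq]
      ring

lemma reach_congr {c d d' : σ → ℝ} (h : Reach react prod c d) (hdd : ∀ s, d s = d' s) :
    Reach react prod c d' := by
  have : d = d' := funext hdd
  rwa [← this]

lemma reach_congr' {c c' d : σ → ℝ} (h : Reach react prod c d) (hcc : ∀ s, c s = c' s) :
    Reach react prod c' d := by
  have : c = c' := funext hcc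
  rwa [← this]

lemma reach_avg {c d e : σ → ℝ} (hc : ∀ s, 0 ≤ c s)
    (hd : Reach react prod c d) (he : Reach react prod c e) :
    Reach react prod c (fun s => (d s + e s) / 2) := by
  have hd0 : ∀ s, 0 ≤ d s := reach_nonneg react prod hc hd
  have hz : ∀ s, 0 ≤ (1:ℝ)/2 * c s := fun s => by have := hc s; linarith
  have hz' : ∀ s, 0 ≤ (1:ℝ)/2 * d s := fun s => by have := hd0 s; linarith
  have step1 : Reach react prod c (fun s => 1/2 * d s + 1/2 * c s) := by
    have := reach_shift react prod hd (1/2) (by norm_num) (fun s => 1/2 * c s) hz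
    exact reach_congr' react prod this (fun s => by ring)
  have step2 : Reach react prod (fun s => 1/2 * d s + 1/2 * c s)
      (fun s => (d s + e s)/2) := by
    have := reach_shift react prod he (1/2) (by norm_num) (fun s => 1/2 * d s) hz'
    have h2 := reach_congr' react prod this (fun s => by ring :
      ∀ s, 1/2 * c s + 1/2 * d s = 1/2 * d s + 1/2 * c s)
    exact reach_congr react prod h2 (fun s => by ring)
  exact step1.trans step2

lemma exists_full_support (c : σ → ℝ) (hc : ∀ s, 0 ≤ c s) :
    ∃ c1, Reach react prod c c1 ∧
      ∀ s, (∃ d, Reach react prod c d ∧ 0 < d s) → 0 < c1 s := by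
  classical
  suffices h : ∀ t : Finset σ, ∃ c1, Reach react prod c c1 ∧
      ∀ s ∈ t, (∃ d, Reach react prod c d ∧ 0 < d s) → 0 < c1 s by
    obtain ⟨c1, h1, h2⟩ := h Finset.univ
    exact ⟨c1, h1, fun s hs => h2 s (Finset.mem_univ s) hs⟩
  intro t
  induction t using Finset.induction_on with
  | empty => exact ⟨c, Relation.ReflTransGen.refl, fun s hs => absurd hs (Finset.notMem_empty s)⟩
  | @insert s t hs ih =>
    obtain ⟨c1, h1, h2⟩ := ih
    by_cases hex : ∃ d, Reach react prod c d ∧ 0 < d s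
    · obtain ⟨d, hdr, hds⟩ := hex
      refine ⟨fun s' => (c1 s' + d s') / 2, reach_avg react prod hc h1 hdr, ?_⟩
      intro s' hs' hex'
      have hc10 : ∀ s'', 0 ≤ c1 s'' := reach_nonneg react prod hc h1
      have hd0 : ∀ s'', 0 ≤ d s'' := reach_nonneg react prod hc hdr
      rcases Finset.mem_insert.mp hs' with h | h
      · subst h
        have := hc10 s'
        linarith
      · have := h2 s' h hex'
        have := hd0 s'
        linarith
    · refine ⟨c1, h1, ?_⟩
      intro s' hs' hex'
      rcases Finset.mem_insert.mp hs' with h | h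
      · subst h; exact absurd hex' hex
      · exact h2 s' h hex'

lemma reach_decomp {c c1 : σ → ℝ} (hc1 : Reach react prod c c1)
    (hfull : ∀ s, (∃ d, Reach react prod c d ∧ 0 < d s) → 0 < c1 s)
    {z : σ → ℝ} (hz : Reach react prod c1 z) :
    ∃ u : ρ → ℝ, (∀ r, 0 ≤ u r) ∧ Applicable react u c1 ∧
      ∀ s, z s = c1 s + StoichAct react prod u s := by
  induction hz with
  | refl =>
    exact ⟨fun _ => 0, fun r => le_refl 0, fun r hr => absurd hr (lt_irrefl 0),
      fun s => by rw [stoich_zero]; ring⟩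
  | @tail y z' hyz hstep ih =>
    obtain ⟨u, hu0, huapp, heq⟩ := ih
    obtain ⟨v, hv0, hvapp, hz0, hveq⟩ := hstep
    refine ⟨fun r => u r + v r, fun r => add_nonneg (hu0 r) (hv0 r), ?_, ?_⟩
    · intro r hr s hs
      have hr' : 0 < u r + v r := hr
      rcases lt_or_ge 0 (u r) with h | h
      · exact huapp r h s hs
      · have hvr : 0 < v r := by linarith
        have hys : 0 < y s := hvapp r hvr s hs
        exact hfull s ⟨y, hc1.trans hyz, hys⟩
    · intro s
      rw [stoich_add, hveq s, heq s]
      ring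

end

section
variable {σ ρ : Type} [Fintype σ] [Fintype ρ] (react prod : ρ → σ → ℕ)

lemma sum_ite_single [DecidableEq ρ] (r : ρ) (coef : ℝ) (u : ρ → ℝ) :
    ∑ r', (if r' = r then coef else 0) * u r' = coef * u r := by
  rw [Finset.sum_eq_single r]
  · simp
  · intro b _ hb; simp [hb]
  · intro h; exact absurd (Finset.mem_univ r) h

end

/-- If the concentration of species `S` is bounded above over all states reachable
from `c`, then there is a state `d` reachable from `c` maximizing the concentration
of `S` among all states reachable from `d`. -/
theorem exists_max_species {σ ρ : Type} [Fintype σ] [Fintype ρ]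
    (react prod : ρ → σ → ℕ) (c : σ → ℝ) (hc : ∀ s, 0 ≤ c s) (S : σ) (B : ℝ)
    (hbound : ∀ d, Reach react prod c d → d S ≤ B) :
    ∃ d : σ → ℝ, Reach react prod c d ∧ ∀ a, Reach react prod d a → a S ≤ d S := by
  classical
  obtain ⟨c1, hc1, hfull⟩ := exists_full_support react prod c hc
  have hc10 : ∀ s, 0 ≤ c1 s := reach_nonneg react prod hc hc1
  set R1 : ρ → Prop := fun r => ∀ s, 0 < react r s → 0 < c1 s with hR1
  set K : Set (ρ → ℝ) := {u | (∀ r, 0 ≤ u r) ∧ (∀ r, ¬ R1 r → u r ≤ 0) ∧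
      (∀ s, 0 ≤ c1 s + StoichAct react prod u s)} with hKdef
  have hstoichneg : ∀ (u : ρ → ℝ) (s : σ),
      ∑ r, (-((prod r s : ℝ) - (react r s : ℝ))) * u r = -StoichAct react prod u s := by
    intro u s
    unfold StoichAct
    rw [← Finset.sum_neg_distrib]
    exact Finset.sum_congr rfl (fun r _ => by ring)
  have hKpoly : PolyOn Finset.univ K := by
    refine ⟨ρ ⊕ ρ ⊕ σ, inferInstance,
      (fun i => Sum.elim (fun r => fun r' => if r' = r then (-1:ℝ) else 0)
        (Sum.elim (fun r => fun r' => if R1 r then 0 else if r' = r then 1 else 0)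
          (fun s => fun r => -((prod r s : ℝ) - (react r s : ℝ)))) i),
      (Sum.elim (fun _ => (0:ℝ)) (Sum.elim (fun _ => (0:ℝ)) (fun s => c1 s))),
      fun i j hj => absurd (Finset.mem_univ j) hj, ?_⟩
    ext u
    simp only [hKdef, Set.mem_setOf_eq]
    constructor
    · rintro ⟨h1, h2, h3⟩
      rintro (r | r | s)
      · simp only [Sum.elim_inl]
        rw [sum_ite_single]
        have := h1 r
        linarith
      · simp only [Sum.elim_inr, Sum.elim_inl]
        by_cases hR : R1 r
        · simp only [if_pos hR, zero_mul, Finset.sum_const_zero]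
          exact le_refl 0
        · simp only [if_neg hR]
          rw [sum_ite_single]
          have := h2 r hR
          linarith
      · simp only [Sum.elim_inr]
        rw [hstoichneg]
        have := h3 s
        linarith
    · intro h
      refine ⟨?_, ?_, ?_⟩
      · intro r
        have := h (Sum.inl r)
        simp only [Sum.elim_inl] at this
        rw [sum_ite_single] at this
        linarith
      · intro r hR
        have := h (Sum.inr (Sum.inl r))
        simp only [Sum.elim_inr, Sum.elim_inl, if_neg hR] at this
        rw [sum_ite_single] at this
        linarith
      · intro s
        have := h (Sum.inr (Sum.inr s))
        simp only [Sum.elim_inr] at this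
        rw [hstoichneg] at this
        linarith
  have hK0 : (fun _ => (0:ℝ)) ∈ K := by
    refine ⟨fun r => le_refl 0, fun r _ => le_refl 0, fun s => ?_⟩
    rw [stoich_zero]
    simpa using hc10 s
  set w : ρ → ℝ := fun r => (prod r S : ℝ) - react r S with hw
  have hfw : ∀ u : ρ → ℝ, ∑ r, w r * u r = StoichAct react prod u S := by
    intro u
    unfold StoichAct
    exact Finset.sum_congr rfl (fun r _ => by ring)
  have hc1step : ∀ u ∈ K, Reach react prod c1 (fun s => c1 s + StoichAct react prod u s) := by
    intro u hu
    obtain ⟨h1, h2, h3⟩ := hu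
    refine Relation.ReflTransGen.single ⟨u, h1, ?_, h3, fun s => rfl⟩
    intro r hr s hs
    by_cases hR : R1 r
    · exact hR s hs
    · exact absurd (h2 r hR) (not_le.mpr hr)
  have hKreach : ∀ u ∈ K, Reach react prod c (fun s => c1 s + StoichAct react prod u s) :=
    fun u hu => hc1.trans (hc1step u hu)
  have hbnd : ∀ u ∈ K, ∑ r, w r * u r ≤ B - c1 S := by
    intro u hu
    have h := hbound _ (hKreach u hu)
    rw [hfw]
    linarith
  obtain ⟨u, huK, humax⟩ := lp_attain hKpoly ⟨_, hK0⟩ w (B - c1 S) hbnd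
  refine ⟨fun s => c1 s + StoichAct react prod u s, hKreach u huK, ?_⟩
  intro a ha
  have hc1a : Reach react prod c1 a := (hc1step u huK).trans ha
  obtain ⟨v, hv0, hvapp, hveq⟩ := reach_decomp react prod hc1 hfull hc1a
  have hvK : v ∈ K := by
    refine ⟨hv0, ?_, ?_⟩
    · intro r hR
      by_contra h
      push_neg at h
      exact hR (fun s hs => hvapp r h s hs)
    · intro s
      rw [← hveq s]
      exact reach_nonneg react prod hc (hc1.trans hc1a) s
  have h2 := humax v hvK
  rw [hfw, hfw] at h2
  show a S ≤ c1 S + StoichAct react prod u S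
  rw [hveq S]
  linarith
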